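/- Let k ≥ 2 and n ≥ 2k² + 3. Let f(x) = x⁴ − (n² − 2n + 2k)x² + 2k(n−k)(n−2). Then f(n−1) > 0, and f′(x) > 0 for all x ≥ n−1; consequently every real root of f is strictly less than n−1. -/
import Mathlib


/-- For `k ≥ 2`, `n ≥ 2k² + 3` and
`f(x) = x⁴ − (n² − 2n + 2k)x² + 2k(n−k)(n−2)`: `f(n−1) > 0`, `f′(x) > 0` for `x ≥ n−1`,
and every real root of `f` is `< n−1`. -/
theorem stmt3 (n k : ℕ) (hk : 2 ≤ k) (hn : 2 * k ^ 2 + 3 ≤ n) (f : ℝ → ℝ)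
    (hf : ∀ x : ℝ, f x = x ^ 4 - ((n : ℝ) ^ 2 - 2 * n + 2 * k) * x ^ 2
        + 2 * k * ((n : ℝ) - k) * ((n : ℝ) - 2)) :
    0 < f ((n : ℝ) - 1) ∧ (∀ x : ℝ, (n : ℝ) - 1 ≤ x → 0 < deriv f x) ∧
    ∀ x : ℝ, f x = 0 → x < (n : ℝ) - 1 := by
  have hK : (2:ℝ) ≤ (k:ℝ) := by exact_mod_cast hk
  have hN : 2*(k:ℝ)^2 + 3 ≤ (n:ℝ) := by exact_mod_cast hn
  have hn0 : (0:ℝ) ≤ (n:ℝ) := by positivity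
  have hN0 : (0:ℝ) ≤ (n:ℝ) - (2*(k:ℝ)^2 + 3) := by linarith
  have hfe : f = fun x : ℝ => x ^ 4 - ((n : ℝ) ^ 2 - 2 * n + 2 * k) * x ^ 2
        + 2 * k * ((n : ℝ) - k) * ((n : ℝ) - 2) := funext hf
  have h1 : 0 < f ((n:ℝ) - 1) := by
    rw [hf]
    nlinarith [mul_nonneg hn0 hN0, sq_nonneg ((k:ℝ) - 2), sq_nonneg ((n:ℝ) - 2)]
  have hgap : 0 < (n:ℝ)^2 - 2*(n:ℝ) + 2 - 2*(k:ℝ) := by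
    nlinarith [mul_nonneg hn0 hN0, sq_nonneg ((k:ℝ) - 2)]
  refine ⟨h1, ?_, ?_⟩
  · intro x hx
    have hx0 : (0:ℝ) < x := by nlinarith
    have hx2 : ((n:ℝ) - 1)^2 ≤ x^2 := by nlinarith
    have h2 : 0 < 2*x^2 - ((n:ℝ)^2 - 2*n + 2*k) := by nlinarith
    have hd : deriv f x = 4*x^3 - ((n:ℝ)^2 - 2*n + 2*k)*(2*x) := by
      rw [hfe]
      have h := (((hasDerivAt_pow 4 x).sub
        ((hasDerivAt_pow 2 x).const_mul ((n:ℝ)^2 - 2*n + 2*k))).add_const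
        (2*(k:ℝ)*((n:ℝ)-(k:ℝ))*((n:ℝ)-2))).deriv
      simpa using h
    rw [hd]
    nlinarith [mul_pos hx0 h2]
  · intro x hxroot
    by_contra h
    push_neg at h
    have hx2 : ((n:ℝ) - 1)^2 ≤ x^2 := by nlinarith
    have key : f x = f ((n:ℝ) - 1)
        + (x^2 - ((n:ℝ)-1)^2) * (x^2 + ((n:ℝ)-1)^2 - ((n:ℝ)^2 - 2*n + 2*k)) := by
      rw [hf, hf]; ring
    have hpos : 0 < f x := by
      have hfac : 0 ≤ (x^2 - ((n:ℝ)-1)^2) * (x^2 + ((n:ℝ)-1)^2 - ((n:ℝ)^2 - 2*n + 2*k)) := by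
        apply mul_nonneg (by linarith)
        nlinarith
      linarith [key.ge, key.le]
    linarith [hxroot]
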